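/- arXiv:2401.16726 — 2 statements merged into one kernel-verified Lean document; each statement's English description precedes it below -/
import Mathlib

section
/- For a discrete memoryless channel P_{Y|X} with finite input alphabet 𝒳 and finite output alphabet 𝒴 all of whose entries are positive, the capacity C = max_{P_X} I(P_X, P_{Y|X}) satisfies C ≤ C_1, where C_1 = max_{x, x'} D(P_{Y|X=x} || P_{Y|X=x'}). -/
open scoped BigOperators

/-- For a DMC with all entries positive, the capacity satisfies `C ≤ C₁`:
the mutual information of any input distribution is at most the maximum KL
divergence between two rows of the channel. -/
theorem stmt5 {α β : Type} [Fintype α] [Fintype β] [Nonempty α] [Nonempty β]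
    (W : α → β → ℝ) (hW : ∀ x y, 0 < W x y) (hWsum : ∀ x, ∑ y, W x y = 1)
    (PX : α → ℝ) (hPX : ∀ x, 0 ≤ PX x) (hPXsum : ∑ x, PX x = 1) :
    ∑ x, ∑ y, PX x * W x y * Real.log (W x y / (∑ x', PX x' * W x' y))
      ≤ (Finset.univ ×ˢ Finset.univ : Finset (α × α)).sup'
          (Finset.univ_nonempty.product Finset.univ_nonempty)
          (fun p => ∑ y, W p.1 y * Real.log (W p.1 y / W p.2 y)) := by
  set M := (Finset.univ ×ˢ Finset.univ : Finset (α × α)).sup'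
      (Finset.univ_nonempty.product Finset.univ_nonempty)
      (fun p => ∑ y, W p.1 y * Real.log (W p.1 y / W p.2 y)) with hM
  have hDM : ∀ x x' : α, ∑ y, W x y * Real.log (W x y / W x' y) ≤ M := by
    intro x x'
    have : ((x, x') : α × α) ∈ (Finset.univ ×ˢ Finset.univ : Finset (α × α)) := by simp
    exact Finset.le_sup' (fun p : α × α => ∑ y, W p.1 y * Real.log (W p.1 y / W p.2 y)) this
  obtain ⟨x₀, hx₀⟩ : ∃ x, 0 < PX x := by
    by_contra h
    push_neg at h
    have h0 : ∑ x, PX x = 0 :=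
      Finset.sum_eq_zero fun x _ => le_antisymm (h x) (hPX x)
    rw [h0] at hPXsum; norm_num at hPXsum
  have hQpos : ∀ y, 0 < ∑ x', PX x' * W x' y := by
    intro y
    have h1 : PX x₀ * W x₀ y ≤ ∑ x', PX x' * W x' y :=
      Finset.single_le_sum (fun i _ => mul_nonneg (hPX i) (hW i y).le) (Finset.mem_univ x₀)
    exact lt_of_lt_of_le (mul_pos hx₀ (hW x₀ y)) h1
  have jensen : ∀ y, ∑ x', PX x' * Real.log (W x' y) ≤ Real.log (∑ x', PX x' * W x' y) := by
    intro y
    have := strictConcaveOn_log_Ioi.concaveOn.le_map_sum (t := Finset.univ)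
      (w := PX) (p := fun x' => W x' y) (fun i _ => hPX i) hPXsum
      (fun i _ => Set.mem_Ioi.mpr (hW i y))
    simpa [smul_eq_mul] using this
  have key : ∀ x y, PX x * W x y * Real.log (W x y / ∑ x', PX x' * W x' y)
      ≤ ∑ x', PX x' * (PX x * (W x y * Real.log (W x y / W x' y))) := by
    intro x y
    rw [Real.log_div (hW x y).ne' (hQpos y).ne']
    have h1 : Real.log (W x y) - Real.log (∑ x', PX x' * W x' y)
        ≤ ∑ x', PX x' * Real.log (W x y / W x' y) := by
      have heq : ∑ x', PX x' * Real.log (W x y / W x' y)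
          = Real.log (W x y) - ∑ x', PX x' * Real.log (W x' y) := by
        have : ∀ x', PX x' * Real.log (W x y / W x' y)
            = PX x' * Real.log (W x y) - PX x' * Real.log (W x' y) := by
          intro x'
          rw [Real.log_div (hW x y).ne' (hW x' y).ne', mul_sub]
        simp_rw [this]
        rw [Finset.sum_sub_distrib, ← Finset.sum_mul, hPXsum, one_mul]
      rw [heq]
      linarith [jensen y]
    calc PX x * W x y * (Real.log (W x y) - Real.log (∑ x', PX x' * W x' y))
        ≤ PX x * W x y * ∑ x', PX x' * Real.log (W x y / W x' y) :=
          mul_le_mul_of_nonneg_left h1 (mul_nonneg (hPX x) (hW x y).le)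
      _ = ∑ x', PX x' * (PX x * (W x y * Real.log (W x y / W x' y))) := by
          rw [Finset.mul_sum]
          exact Finset.sum_congr rfl fun x' _ => by ring
  calc ∑ x, ∑ y, PX x * W x y * Real.log (W x y / ∑ x', PX x' * W x' y)
      ≤ ∑ x, ∑ y, ∑ x', PX x' * (PX x * (W x y * Real.log (W x y / W x' y))) :=
        Finset.sum_le_sum fun x _ => Finset.sum_le_sum fun y _ => key x y
    _ = ∑ x, ∑ x', PX x * PX x' * ∑ y, W x y * Real.log (W x y / W x' y) := by
        refine Finset.sum_congr rfl fun x _ => ?_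
        rw [Finset.sum_comm]
        refine Finset.sum_congr rfl fun x' _ => ?_
        rw [Finset.mul_sum]
        exact Finset.sum_congr rfl fun y _ => by ring
    _ ≤ ∑ x, ∑ x', PX x * PX x' * M := by
        refine Finset.sum_le_sum fun x _ => Finset.sum_le_sum fun x' _ => ?_
        exact mul_le_mul_of_nonneg_left (hDM x x') (mul_nonneg (hPX x) (hPX x'))
    _ = M := by
        simp_rw [mul_assoc, ← Finset.mul_sum, ← Finset.sum_mul, hPXsum, one_mul]
end

section
/- For any type Q_X ∈ 𝒫_n(𝒳) on a finite alphabet 𝒳, the size of the type class satisfies |𝒯_n(Q_X)| ≤ exp{n H(Q_X)} · (2πn)^{−(|𝒳|−1)/2} · Π_{x ∈ 𝒳} (1/√(Q̃_X(x))), where Q̃_X(x) = 1/(2πn) if Q_X(x) = 0 and Q̃_X(x) = Q_X(x) otherwise. -/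
open scoped BigOperators
open Real Finset


lemma factorial_eq_stirling (n : ℕ) (hn : 0 < n) :
    (n.factorial : ℝ) = Stirling.stirlingSeq n * (√(2*n) * ((n:ℝ)/Real.exp 1)^n) := by
  rw [Stirling.stirlingSeq, div_mul_cancel₀]
  have : (0:ℝ) < n := by exact_mod_cast hn
  positivity

lemma stirling_ge_sqrt_pi (n : ℕ) (hn : 0 < n) : √π ≤ Stirling.stirlingSeq n := by
  obtain ⟨m, rfl⟩ := Nat.exists_eq_add_of_lt hn
  have h := Stirling.stirlingSeq'_antitone.le_of_tendsto
    (Stirling.tendsto_stirlingSeq_sqrt_pi.comp (Filter.tendsto_add_atTop_nat 1)) m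
  simpa using h

lemma binom_bound (a b : ℕ) (ha : 0 < a) (hb : 0 < b) :
    ((a+b).factorial : ℝ) / (a.factorial * b.factorial) ≤
      (a+b:ℝ)^(a+b) * √(a+b) / (√(2*π) * ((a:ℝ)^a * √a) * ((b:ℝ)^b * √b)) := by
  have hae : (0:ℝ) < a := by exact_mod_cast ha
  have hbe : (0:ℝ) < b := by exact_mod_cast hb
  have hNe : (0:ℝ) < (a:ℝ) + b := by linarith
  have hsa : 0 < Stirling.stirlingSeq a := by
    rw [Stirling.stirlingSeq]; positivity
  have hsb : 0 < Stirling.stirlingSeq b := by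
    rw [Stirling.stirlingSeq]; positivity
  have key : Stirling.stirlingSeq (a+b) * √π ≤ Stirling.stirlingSeq a * Stirling.stirlingSeq b := by
    have h1 : Stirling.stirlingSeq (a+b) ≤ Stirling.stirlingSeq a := by
      obtain ⟨a', rfl⟩ := Nat.exists_eq_succ_of_ne_zero ha.ne'
      have := Stirling.stirlingSeq'_antitone (Nat.le_add_right a' b)
      simpa [Nat.succ_eq_add_one, Nat.add_right_comm] using this
    have h2 : √π ≤ Stirling.stirlingSeq b := stirling_ge_sqrt_pi b hb
    exact mul_le_mul h1 h2 (Real.sqrt_nonneg _) hsa.le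
  -- main inequality
  rw [factorial_eq_stirling _ (by positivity), factorial_eq_stirling a ha, factorial_eq_stirling b hb]
  have hπ : √(2*π) = √2 * √π := Real.sqrt_mul (by norm_num) _
  have h2a : √(2*(a:ℝ)) = √2 * √a := Real.sqrt_mul (by norm_num) _
  have h2b : √(2*(b:ℝ)) = √2 * √b := Real.sqrt_mul (by norm_num) _
  have h2N : √(2*((a:ℕ)+b:ℝ)) = √2 * √((a:ℝ)+b) := Real.sqrt_mul (by norm_num) _
  rw [div_le_div_iff₀ (by positivity) (by positivity)]
  push_cast
  rw [h2a, h2b, h2N, hπ]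
  have hexp : (0:ℝ) < Real.exp 1 := Real.exp_pos 1
  have hepow : (Real.exp 1)^a * (Real.exp 1)^b = (Real.exp 1)^(a+b) := by
    rw [pow_add]
  calc Stirling.stirlingSeq (a + b) * (√2 * √((a:ℝ) + ↑b) * (((a:ℝ) + ↑b) / Real.exp 1) ^ (a + b)) *
        (√2 * √π * ((a:ℝ) ^ a * √↑a) * ((b:ℝ) ^ b * √↑b))
      = (Stirling.stirlingSeq (a+b) * √π) * (√2 * √((a:ℝ)+b) * ((a:ℝ)+b)^(a+b) / (Real.exp 1)^(a+b) * (√2 * (a:ℝ)^a * √a * (b:ℝ)^b * √b)) := by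
        rw [div_pow]; field_simp
    _ ≤ (Stirling.stirlingSeq a * Stirling.stirlingSeq b) * (√2 * √((a:ℝ)+b) * ((a:ℝ)+b)^(a+b) / (Real.exp 1)^(a+b) * (√2 * (a:ℝ)^a * √a * (b:ℝ)^b * √b)) := by
        apply mul_le_mul_of_nonneg_right key
        positivity
    _ = Stirling.stirlingSeq a * (√2 * √↑a * ((a:ℝ) / Real.exp 1) ^ a) *
        (Stirling.stirlingSeq b * (√2 * √↑b * ((b:ℝ) / Real.exp 1) ^ b)) *
        (((a:ℝ) + ↑b) ^ (a + b) * √((a:ℝ) + ↑b)) := by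
        rw [div_pow, div_pow, ← hepow]; field_simp
    _ = ((a:ℝ) + ↑b) ^ (a + b) * √((a:ℝ) + ↑b) *
        (Stirling.stirlingSeq a * (√2 * √↑a * ((a:ℝ) / Real.exp 1) ^ a) *
        (Stirling.stirlingSeq b * (√2 * √↑b * ((b:ℝ) / Real.exp 1) ^ b))) := by ring

lemma multinom_bound {α : Type} [DecidableEq α] (s : Finset α) (hs : s.Nonempty) (k : α → ℕ)
    (hpos : ∀ x ∈ s, 0 < k x) :
    ((∑ x ∈ s, k x).factorial : ℝ) / ∏ x ∈ s, ((k x).factorial : ℝ) ≤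
      ((∑ x ∈ s, k x : ℕ) : ℝ)^(∑ x ∈ s, k x) * √((∑ x ∈ s, k x : ℕ)) /
        (√(2*π)^(s.card - 1) * ∏ x ∈ s, (((k x):ℝ)^(k x) * √((k x):ℝ))) := by
  induction hs using Finset.Nonempty.cons_induction with
  | singleton a =>
    have hk : 0 < k a := hpos a (mem_singleton_self a)
    have hk' : (0:ℝ) < (k a : ℝ) := by exact_mod_cast hk
    simp only [sum_singleton, prod_singleton, card_singleton]
    rw [div_self (by positivity), pow_zero, one_mul, div_self (by positivity)]
  | cons a t hat ht ih =>
    have hA : 0 < k a := hpos a (mem_cons_self a t)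
    have hposT : ∀ x ∈ t, 0 < k x := fun x hx => hpos x (mem_cons_of_mem hx)
    have hM : 0 < ∑ x ∈ t, k x := by
      obtain ⟨b, hb⟩ := ht
      exact lt_of_lt_of_le (hposT b hb) (Finset.single_le_sum (fun x _ => Nat.zero_le _) hb)
    have ih' := ih hposT
    set A := k a with hAdef
    set M := ∑ x ∈ t, k x with hMdef
    have hAe : (0:ℝ) < A := by exact_mod_cast hA
    have hMe : (0:ℝ) < M := by exact_mod_cast hM
    have hfacM : (0:ℝ) < (M.factorial : ℝ) := by exact_mod_cast M.factorial_pos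
    have hfacA : (0:ℝ) < (A.factorial : ℝ) := by exact_mod_cast A.factorial_pos
    have hprodfac : (0:ℝ) < ∏ x ∈ t, ((k x).factorial : ℝ) := by
      apply Finset.prod_pos; intro x hx; exact_mod_cast (k x).factorial_pos
    have hprodk : (0:ℝ) < ∏ x ∈ t, (((k x):ℝ)^(k x) * √((k x):ℝ)) := by
      apply Finset.prod_pos; intro x hx
      have : (0:ℝ) < (k x : ℝ) := by exact_mod_cast hposT x hx
      positivity
    rw [Finset.sum_cons, Finset.prod_cons, Finset.prod_cons, Finset.card_cons]
    have hsplit : ((A + M).factorial : ℝ) / ((A.factorial : ℝ) * ∏ x ∈ t, ((k x).factorial : ℝ))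
        = (((A + M).factorial : ℝ) / ((A.factorial : ℝ) * (M.factorial : ℝ))) *
          ((M.factorial : ℝ) / ∏ x ∈ t, ((k x).factorial : ℝ)) := by
      field_simp
    rw [hsplit]
    have hbin := binom_bound A M hA hM
    have step := mul_le_mul hbin ih' (by positivity) (by positivity)
    refine step.trans_eq ?_
    have hcard : t.card = (t.card - 1) + 1 := (Nat.succ_pred_eq_of_pos (Finset.card_pos.mpr ht)).symm
    have hc2 : t.card + 1 - 1 = (t.card - 1) + 1 := by omega
    have h2π : (0:ℝ) < √(2*π) := by positivity
    have hcastN : ((A + M : ℕ) : ℝ) = (A:ℝ) + (M:ℝ) := by push_cast; ring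
    rw [hc2, pow_succ, hcastN, div_mul_div_comm,
      div_eq_div_iff (by positivity) (by positivity)]
    ring


section Counting
variable {α : Type} [DecidableEq α]

/-- fiberwise equivalence description of permutations intertwining f and g -/
def permFiberEquiv {n : ℕ} (f g : Fin n → α) :
    {σ : Equiv.Perm (Fin n) // f ∘ σ = g} ≃ (∀ x : α, {i // g i = x} ≃ {i // f i = x}) where
  toFun := fun ⟨σ, hσ⟩ x => Equiv.subtypeEquiv σ (fun i => by
    constructor
    · rintro rfl; exact (congrFun hσ i).symm ▸ rfl
    · intro h; rw [← h, ← congrFun hσ i]; rfl)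
  invFun := fun e => by
    refine ⟨⟨fun i => (e (g i) ⟨i, rfl⟩).val, fun j => ((e (f j)).symm ⟨j, rfl⟩).val, ?_, ?_⟩, ?_⟩
    · intro i
      dsimp only
      have key2 : ∀ (x x' : α) (hxx' : x = x') (j : Fin n) (h : f j = x) (h' : f j = x'),
          ((e x).symm ⟨j, h⟩).val = ((e x').symm ⟨j, h'⟩).val := by
        rintro x x' rfl j h h'; rfl
      have hF : f ((e (g i) ⟨i, rfl⟩).val) = g i := ((e (g i)) ⟨i, rfl⟩).prop
      rw [key2 (f ((e (g i) ⟨i, rfl⟩).val)) (g i) hF _ rfl hF]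
      have : (⟨(e (g i) ⟨i, rfl⟩).val, hF⟩ : {j // f j = g i}) = e (g i) ⟨i, rfl⟩ :=
        Subtype.ext rfl
      rw [this, Equiv.symm_apply_apply]
    · intro j
      dsimp only
      have key1 : ∀ (x x' : α) (hxx' : x = x') (i : Fin n) (h : g i = x) (h' : g i = x'),
          ((e x) ⟨i, h⟩).val = ((e x') ⟨i, h'⟩).val := by
        rintro x x' rfl i h h'; rfl
      have hG : g (((e (f j)).symm ⟨j, rfl⟩).val) = f j := ((e (f j)).symm ⟨j, rfl⟩).prop
      rw [key1 (g (((e (f j)).symm ⟨j, rfl⟩).val)) (f j) hG _ rfl hG]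
      have : (⟨((e (f j)).symm ⟨j, rfl⟩).val, hG⟩ : {i // g i = f j}) = (e (f j)).symm ⟨j, rfl⟩ :=
        Subtype.ext rfl
      rw [this, Equiv.apply_symm_apply]
    · funext i
      exact ((e (g i)) ⟨i, rfl⟩).prop
  left_inv := fun ⟨σ, hσ⟩ => Subtype.ext (Equiv.ext fun i => rfl)
  right_inv := fun e => by
    funext x
    apply Equiv.ext
    rintro ⟨i, hi⟩
    apply Subtype.ext
    subst hi
    rfl
end Counting

section Counting2
variable {α : Type} [Fintype α] [DecidableEq α]

lemma exists_base (n : ℕ) (k : α → ℕ) (hk : ∑ x, k x = n) :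
    ∃ f₀ : Fin n → α, ∀ x, (Finset.univ.filter (fun i => f₀ i = x)).card = k x := by
  have hcard : Fintype.card (Σ x : α, Fin (k x)) = Fintype.card (Fin n) := by
    simp [Fintype.card_sigma, hk]
  let e0 : (Σ x : α, Fin (k x)) ≃ Fin n := Fintype.equivOfCardEq hcard
  refine ⟨fun i => (e0.symm i).1, fun x => ?_⟩
  rw [← Fintype.card_subtype]
  have e1 : {i : Fin n // (e0.symm i).1 = x} ≃ {p : Σ y : α, Fin (k y) // p.1 = x} :=
    (Equiv.subtypeEquiv e0.symm (fun i => Iff.rfl))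
  have e2 : {p : Σ y : α, Fin (k y) // p.1 = x} ≃ Fin (k x) :=
    { toFun := fun p => p.2 ▸ p.1.2
      invFun := fun j => ⟨⟨x, j⟩, rfl⟩
      left_inv := fun ⟨⟨y, j⟩, h⟩ => by subst h; rfl
      right_inv := fun j => rfl }
  rw [Fintype.card_congr (e1.trans e2), Fintype.card_fin]

lemma card_typeclass (n : ℕ) (k : α → ℕ) (hk : ∑ x, k x = n) :
    (Fintype.card {f : Fin n → α //
        ∀ x, (Finset.univ.filter (fun i => f i = x)).card = k x}) * ∏ x, (k x).factorial
      = n.factorial := by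
  classical
  obtain ⟨f₀, hf₀⟩ := exists_base n k hk
  set E := {f : Fin n → α // ∀ x, (Finset.univ.filter (fun i => f i = x)).card = k x} with hE
  have hΦmem : ∀ σ : Equiv.Perm (Fin n), ∀ x,
      (Finset.univ.filter (fun i => f₀ (σ i) = x)).card = k x := by
    intro σ x
    rw [← Fintype.card_subtype, ← hf₀ x, ← Fintype.card_subtype]
    exact Fintype.card_congr
      (Equiv.subtypeEquiv (p := fun i => f₀ (σ i) = x) (q := fun j => f₀ j = x) σ
        (fun i => Iff.rfl))
  let Φ : Equiv.Perm (Fin n) → E := fun σ => ⟨f₀ ∘ σ, hΦmem σ⟩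
  have hperm : Fintype.card (Equiv.Perm (Fin n)) = n.factorial := by
    rw [Fintype.card_perm, Fintype.card_fin]
  have hsigma : Fintype.card (Σ g : E, {σ // Φ σ = g}) = Fintype.card (Equiv.Perm (Fin n)) :=
    Fintype.card_congr (Equiv.sigmaFiberEquiv Φ)
  rw [Fintype.card_sigma] at hsigma
  have hfib : ∀ g : E, Fintype.card {σ // Φ σ = g} = ∏ x, (k x).factorial := by
    intro g
    have e3 : {σ // Φ σ = g} ≃ {σ : Equiv.Perm (Fin n) // f₀ ∘ σ = g.val} :=
      Equiv.subtypeEquiv (Equiv.refl _) (fun σ => by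
        simp only [Equiv.refl_apply]
        constructor
        · intro h; exact congrArg Subtype.val h
        · intro h; exact Subtype.ext h)
    rw [Fintype.card_congr (e3.trans (permFiberEquiv f₀ g.val)), Fintype.card_pi]
    refine Finset.prod_congr rfl (fun x _ => ?_)
    have hcg : Fintype.card {i // g.val i = x} = k x := by
      rw [Fintype.card_subtype, g.prop x]
    have hcf : Fintype.card {i // f₀ i = x} = k x := by
      rw [Fintype.card_subtype, hf₀ x]
    rw [Fintype.card_equiv (Fintype.equivOfCardEq (hcg.trans hcf.symm)), hcg]
  rw [Finset.sum_congr rfl (fun g _ => hfib g), Finset.sum_const, smul_eq_mul,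
    Finset.card_univ] at hsigma
  rw [← hperm, ← hsigma]
end Counting2


/-- Refined upper bound on the size of a type class:
`|𝒯_n(Q)| ≤ exp{n H(Q)} (2πn)^{-(|𝒳|-1)/2} ∏_x 1/√(Q̃(x))`. -/
theorem stmt7 {α : Type} [Fintype α] [DecidableEq α] (n : ℕ) (hn : 0 < n)
    (k : α → ℕ) (hk : ∑ x, k x = n)
    (Q : α → ℝ) (hQ : ∀ x, Q x = (k x : ℝ) / n)
    (Qt : α → ℝ) (hQt : ∀ x, Qt x = if k x = 0 then 1 / (2 * Real.pi * n) else Q x) :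
    (Fintype.card {f : Fin n → α //
        ∀ x, (Finset.univ.filter (fun i => f i = x)).card = k x} : ℝ)
      ≤ Real.exp ((n : ℝ) * ∑ x, -(Q x * Real.log (Q x))) *
        (2 * Real.pi * n) ^ (-(((Fintype.card α : ℝ) - 1) / 2)) *
        ∏ x, (1 / Real.sqrt (Qt x)) := by
  classical
  set s : Finset α := Finset.univ.filter (fun x => k x ≠ 0) with hs
  have hnR : (0:ℝ) < n := by exact_mod_cast hn
  have hπ : (0:ℝ) < π := Real.pi_pos
  have hks : ∀ x ∈ s, 0 < k x := fun x hx =>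
    Nat.pos_of_ne_zero (Finset.mem_filter.mp hx).2
  have hsum : ∑ x ∈ s, k x = n := by
    rw [hs, Finset.sum_filter_of_ne (fun x _ h => h), hk]
  have hsne : s.Nonempty := by
    rw [Finset.nonempty_iff_ne_empty]
    intro h
    rw [h, Finset.sum_empty] at hsum
    omega
  have hp : 0 < s.card := Finset.card_pos.mpr hsne
  have hpz : s.card + (Finset.univ.filter (fun x => ¬ k x ≠ 0)).card = Fintype.card α := by
    rw [hs]
    rw [Finset.card_filter_add_card_filter_not, Finset.card_univ]
  -- 6a
  have hexp : Real.exp ((n : ℝ) * ∑ x, -(Q x * Real.log (Q x)))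
      = (n:ℝ)^n / ∏ x ∈ s, ((k x):ℝ)^(k x) := by
    have hsum2 : (n : ℝ) * ∑ x, -(Q x * Real.log (Q x))
        = ∑ x ∈ s, ((k x):ℝ) * (Real.log n - Real.log (k x)) := by
      rw [Finset.mul_sum]
      rw [← Finset.sum_filter_of_ne
        (p := fun x => k x ≠ 0) (f := fun x => (n:ℝ) * -(Q x * Real.log (Q x)))
        (fun x _ h => by
          intro h0
          exact h (by simp [hQ x, h0]))]
      refine Finset.sum_congr rfl (fun x hx => ?_)
      have hkx : (0:ℝ) < k x := by exact_mod_cast hks x hx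
      rw [hQ x, Real.log_div hkx.ne' hnR.ne']
      field_simp
      ring
    rw [hsum2, Real.exp_sum]
    have : ∀ x ∈ s, Real.exp (((k x):ℝ) * (Real.log n - Real.log (k x)))
        = (n:ℝ)^(k x) / ((k x):ℝ)^(k x) := by
      intro x hx
      have hkx : (0:ℝ) < k x := by exact_mod_cast hks x hx
      rw [mul_sub, Real.exp_sub, Real.exp_nat_mul, Real.exp_nat_mul,
        Real.exp_log hnR, Real.exp_log hkx]
    rw [Finset.prod_congr rfl this, Finset.prod_div_distrib,
      Finset.prod_pow_eq_pow_sum, hsum]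
  -- 6b
  set z : ℕ := (Finset.univ.filter (fun x => ¬ k x ≠ 0)).card with hz
  have hQtprod : ∏ x, (1 / Real.sqrt (Qt x))
      = Real.sqrt (2*π*n) ^ z * (Real.sqrt n ^ s.card / ∏ x ∈ s, Real.sqrt (k x)) := by
    rw [← Finset.prod_filter_mul_prod_filter_not Finset.univ (fun x => k x ≠ 0)
      (fun x => 1 / Real.sqrt (Qt x))]
    have h1 : ∏ x ∈ Finset.univ.filter (fun x => ¬ k x ≠ 0), (1 / Real.sqrt (Qt x))
        = Real.sqrt (2*π*n) ^ z := by
      rw [hz, ← Finset.prod_const]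
      refine Finset.prod_congr rfl (fun x hx => ?_)
      have hk0 : k x = 0 := by simpa using (Finset.mem_filter.mp hx).2
      rw [hQt x, if_pos hk0, one_div, one_div, Real.sqrt_inv, inv_inv]
    have h2 : ∏ x ∈ s, (1 / Real.sqrt (Qt x))
        = Real.sqrt n ^ s.card / ∏ x ∈ s, Real.sqrt (k x) := by
      rw [← Finset.prod_const, ← Finset.prod_div_distrib]
      refine Finset.prod_congr rfl (fun x hx => ?_)
      have hkx : (0:ℝ) ≤ k x := by positivity
      rw [hQt x, if_neg (Finset.mem_filter.mp hx).2, hQ x,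
        Real.sqrt_div hkx, one_div, inv_div]
    rw [h1, h2, mul_comm]
  -- 6c
  have hX : (0:ℝ) < 2*π*(n:ℝ) := by positivity
  have hcz : ((Fintype.card α : ℝ)) = (s.card : ℝ) + (z : ℝ) := by
    exact_mod_cast congrArg (Nat.cast : ℕ → ℝ) hpz.symm
  have hpow : (2*π*(n:ℝ)) ^ (-(((Fintype.card α : ℝ) - 1)/2)) * Real.sqrt (2*π*n) ^ z
      = 1 / (Real.sqrt (2*π*(n:ℝ))) ^ (s.card - 1) := by
    have hc : (0:ℝ) < Real.sqrt (2*π*n) := Real.sqrt_pos.mpr hX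
    rw [← Real.rpow_natCast (Real.sqrt (2*π*(n:ℝ))) z]
    rw [show (2*π*(n:ℝ)) ^ (-(((Fintype.card α : ℝ) - 1)/2))
        = Real.sqrt (2*π*(n:ℝ)) ^ (-((Fintype.card α : ℝ) - 1)) from ?_]
    · rw [← Real.rpow_add hc]
      have he : -((Fintype.card α : ℝ) - 1) + (z:ℝ) = -(((s.card - 1 : ℕ)):ℝ) := by
        rw [hcz]
        push_cast [Nat.cast_sub hp]
        ring
      rw [he, Real.rpow_neg hc.le, Real.rpow_natCast, one_div]
    · rw [Real.sqrt_eq_rpow, ← Real.rpow_mul hX.le]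
      congr 1
      ring
  -- LHS equality
  have hcount := card_typeclass n k hk
  have hPf : (0:ℝ) < ∏ x, ((k x).factorial : ℝ) :=
    Finset.prod_pos (fun x _ => by exact_mod_cast (k x).factorial_pos)
  have hcardE : (Fintype.card {f : Fin n → α //
        ∀ x, (Finset.univ.filter (fun i => f i = x)).card = k x} : ℝ)
      = (n.factorial : ℝ) / ∏ x, ((k x).factorial : ℝ) := by
    rw [eq_div_iff hPf.ne']
    exact_mod_cast hcount
  have hfacsplit : ∏ x, ((k x).factorial : ℝ) = ∏ x ∈ s, ((k x).factorial : ℝ) := by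
    rw [← Finset.prod_filter_mul_prod_filter_not Finset.univ (fun x => k x ≠ 0)
      (fun x => ((k x).factorial : ℝ))]
    have h1 : ∏ x ∈ Finset.univ.filter (fun x => ¬ k x ≠ 0), ((k x).factorial:ℝ) = 1 :=
      Finset.prod_eq_one (fun x hx => by
        have h0 : k x = 0 := by simpa using (Finset.mem_filter.mp hx).2
        simp [h0])
    rw [h1, mul_one]
  have key := multinom_bound s hsne k hks
  rw [hsum] at key
  rw [hcardE, hfacsplit]
  refine key.trans (le_of_eq ?_)
  -- equality of the two RHS expressions
  have hP1 : (0:ℝ) < ∏ x ∈ s, ((k x):ℝ)^(k x) := Finset.prod_pos (fun x hx => by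
    have : (0:ℝ) < k x := by exact_mod_cast hks x hx
    positivity)
  have hP2 : (0:ℝ) < ∏ x ∈ s, Real.sqrt (k x) := Finset.prod_pos (fun x hx => by
    have : (0:ℝ) < k x := by exact_mod_cast hks x hx
    positivity)
  have h2πs : (0:ℝ) < Real.sqrt (2*π) := by positivity
  have hsn : (0:ℝ) < Real.sqrt n := Real.sqrt_pos.mpr hnR
  have hsplitc : Real.sqrt (2*π*(n:ℝ)) = Real.sqrt (2*π) * Real.sqrt n :=
    Real.sqrt_mul (by positivity) _
  have hprodks : ∏ x ∈ s, (((k x):ℝ)^(k x) * Real.sqrt ((k x):ℝ))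
      = (∏ x ∈ s, ((k x):ℝ)^(k x)) * ∏ x ∈ s, Real.sqrt ((k x):ℝ) :=
    Finset.prod_mul_distrib
  have hsnp : Real.sqrt n ^ s.card = Real.sqrt n ^ (s.card - 1) * Real.sqrt n := by
    rw [← pow_succ]
    congr 1
    exact (Nat.succ_pred_eq_of_pos hp).symm
  rw [hexp, hQtprod,
    show ∀ a b c d : ℝ, a * b * (c * d) = a * (b * c) * d from fun a b c d => by ring,
    hpow, hprodks, hsnp, hsplitc, mul_pow]
  field_simp
end
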